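/- Let G = K_{n_1,...,n_t} be the complete t-partite graph on n = n_1+...+n_t vertices (t ≥ 2). Then the spectrum of its distance Laplacian matrix 𝓛(G) = Tr(G) − 𝓓(G) is {0, n with multiplicity t−1, and n+n_i with multiplicity n_i−1 for each i}. -/

import Mathlib

open Matrix BigOperators Polynomial
open scoped Classical

/-- The distance matrix of the complete multipartite graph `K_{n_1,…,n_t}`:
distance `1` between different parts and `2` within a part. -/
noncomputable def dMatKMP {t : ℕ} (n : Fin t → ℕ) :
    Matrix (Σ i : Fin t, Fin (n i)) (Σ i : Fin t, Fin (n i)) ℝ :=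
  fun x y => if x = y then 0 else if x.1 = y.1 then 2 else 1

/-- The distance Laplacian `𝓛 = Tr - 𝓓` of the complete multipartite graph, where
`Tr` is the diagonal matrix of transmissions (row sums of `𝓓`). -/
noncomputable def dLapKMP {t : ℕ} (n : Fin t → ℕ) :
    Matrix (Σ i : Fin t, Fin (n i)) (Σ i : Fin t, Fin (n i)) ℝ :=
  Matrix.diagonal (fun x => ∑ y, dMatKMP n x y) - dMatKMP n

/-! ### Auxiliary machinery -/

section Aux

/-- conjugation invariance of the characteristic polynomial -/
theorem my_charpoly_conj {m : Type*} [Fintype m] [DecidableEq m]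
    (P Q A : Matrix m m ℝ) (h1 : P * Q = 1) (h2 : Q * P = 1) :
    (Q * A * P).charpoly = A.charpoly := by
  have hcm : ∀ B : Matrix m m ℝ, charmatrix B = Matrix.scalar m (X : ℝ[X]) - B.map C := by
    intro B; ext i j
    by_cases h : i = j
    · subst h; simp [charmatrix_apply_eq, scalar_apply, Matrix.sub_apply, diagonal_apply_eq,
        Matrix.map_apply]
    · simp [charmatrix_apply_ne _ _ _ h, scalar_apply, Matrix.sub_apply, diagonal_apply_ne _ h,
        Matrix.map_apply]
  have hmapQP : Q.map (C : ℝ →+* ℝ[X]) * P.map C = 1 := by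
    rw [← Matrix.map_mul, h2, Matrix.map_one _ (map_zero _) (map_one _)]
  have key : charmatrix (Q * A * P) = Q.map C * charmatrix A * P.map C := by
    rw [hcm, hcm, mul_sub, sub_mul]
    congr 1
    · rw [← (Matrix.scalar_commute (X : ℝ[X]) (fun r => mul_comm _ _) (Q.map C)).eq, mul_assoc,
        hmapQP, mul_one]
    · rw [Matrix.map_mul, Matrix.map_mul, mul_assoc]
  rw [Matrix.charpoly, Matrix.charpoly, key, Matrix.det_mul, Matrix.det_mul]
  have : (Q.map (C : ℝ →+* ℝ[X])).det * (P.map C).det = 1 := by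
    rw [← Matrix.det_mul, hmapQP, Matrix.det_one]
  calc (Q.map (C : ℝ →+* ℝ[X])).det * (charmatrix A).det * (P.map C).det
      = (Q.map (C : ℝ →+* ℝ[X])).det * (P.map C).det * (charmatrix A).det := by ring
    _ = (charmatrix A).det := by rw [this, one_mul]

variable {t : ℕ} (n : Fin t → ℕ)

/-- the distinguished vertex: first vertex of the first part -/
noncomputable def v0KMP (ht : 2 ≤ t) (hpos : ∀ i, 0 < n i) : Σ i : Fin t, Fin (n i) :=
  ⟨⟨0, by omega⟩, ⟨0, hpos _⟩⟩

noncomputable def EmatA (hpos : ∀ i, 0 < n i) :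
    Matrix (Σ i : Fin t, Fin (n i)) (Σ i : Fin t, Fin (n i)) ℝ :=
  fun x y => if x = ⟨y.1, ⟨0, hpos y.1⟩⟩ ∧ (y.2 : ℕ) ≠ 0 then 1 else 0

noncomputable def EmatB (ht : 2 ≤ t) (hpos : ∀ i, 0 < n i) :
    Matrix (Σ i : Fin t, Fin (n i)) (Σ i : Fin t, Fin (n i)) ℝ :=
  fun x y => if x = v0KMP n ht hpos ∧ (y.2 : ℕ) = 0 ∧ (y.1 : ℕ) ≠ 0 then 1 else 0

lemma EmatA_mul_EmatA (hpos : ∀ i, 0 < n i) : EmatA n hpos * EmatA n hpos = 0 := by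
  ext x y
  rw [Matrix.mul_apply]
  refine Finset.sum_eq_zero fun z _ => ?_
  simp only [EmatA, Matrix.zero_apply]
  split_ifs with h1 h2 <;> try simp
  exfalso; rw [h2.1] at h1; exact h1.2 rfl

lemma EmatA_mul_EmatB (ht : 2 ≤ t) (hpos : ∀ i, 0 < n i) :
    EmatA n hpos * EmatB n ht hpos = 0 := by
  ext x y
  rw [Matrix.mul_apply]
  refine Finset.sum_eq_zero fun z _ => ?_
  simp only [EmatA, EmatB, Matrix.zero_apply]
  split_ifs with h1 h2 <;> try simp
  exfalso; rw [h2.1] at h1; exact h1.2 rfl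

lemma EmatB_mul_EmatB (ht : 2 ≤ t) (hpos : ∀ i, 0 < n i) :
    EmatB n ht hpos * EmatB n ht hpos = 0 := by
  ext x y
  rw [Matrix.mul_apply]
  refine Finset.sum_eq_zero fun z _ => ?_
  simp only [EmatB, Matrix.zero_apply]
  split_ifs with h1 h2 <;> try simp
  exfalso; rw [h2.1] at h1; exact h1.2.2 rfl

lemma PQ_one (ht : 2 ≤ t) (hpos : ∀ i, 0 < n i) :
    (1 - (EmatA n hpos + EmatB n ht hpos)) *
      (1 + (EmatA n hpos + EmatB n ht hpos)
        + (EmatA n hpos + EmatB n ht hpos) * (EmatA n hpos + EmatB n ht hpos)) = 1 ∧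
    (1 + (EmatA n hpos + EmatB n ht hpos)
        + (EmatA n hpos + EmatB n ht hpos) * (EmatA n hpos + EmatB n ht hpos)) *
      (1 - (EmatA n hpos + EmatB n ht hpos)) = 1 := by
  set A := EmatA n hpos
  set B := EmatB n ht hpos
  have hAA : A * A = 0 := EmatA_mul_EmatA n hpos
  have hAB : A * B = 0 := EmatA_mul_EmatB n ht hpos
  have hBB : B * B = 0 := EmatB_mul_EmatB n ht hpos
  have hF3 : (A + B) * ((A + B) * (A + B)) = 0 := by
    have h2 : (A + B) * (A + B) = B * A := by
      rw [add_mul, mul_add, mul_add, hAA, hAB, hBB]; simp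
    rw [h2, add_mul, ← mul_assoc, ← mul_assoc, hAB, hBB]; simp
  constructor
  · have : (1 - (A + B)) * (1 + (A + B) + (A + B) * (A + B))
        = 1 - (A + B) * ((A + B) * (A + B)) := by noncomm_ring
    rw [this, hF3, sub_zero]
  · have : (1 + (A + B) + (A + B) * (A + B)) * (1 - (A + B))
        = 1 - (A + B) * ((A + B) * (A + B)) := by noncomm_ring
    rw [this, hF3, sub_zero]

/-- the conjugated (block-triangular) form of the distance Laplacian -/
noncomputable def Amat (N : ℕ) :
    Matrix (Σ i : Fin t, Fin (n i)) (Σ i : Fin t, Fin (n i)) ℝ :=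
  fun x y =>
    if (y.2 : ℕ) ≠ 0 then (if x = y then ((N : ℝ) + n y.1) else 0)
    else if (y.1 : ℕ) ≠ 0 then
      (if (x.2 : ℕ) = 0 then (if x = y then (N : ℝ) else 0)
       else if x.1 = y.1 then -1 else if (x.1 : ℕ) = 0 then 1 else 0)
    else
      (if (x.2 : ℕ) = 0 then (if (x.1 : ℕ) = 0 then 0 else -(n x.1 : ℝ))
       else if (x.1 : ℕ) = 0 then -2 else -1)

noncomputable def bfun : (Σ i : Fin t, Fin (n i)) → Fin 3 :=
  fun x => if (x.2 : ℕ) ≠ 0 then 0 else if (x.1 : ℕ) ≠ 0 then 1 else 2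

lemma charpoly_diagonal {m : Type*} [Fintype m] [DecidableEq m] (d : m → ℝ) :
    (Matrix.diagonal d).charpoly = ∏ i, (X - C (d i)) := by
  rw [Matrix.charpoly]
  have : (Matrix.diagonal d).charmatrix = Matrix.diagonal fun i => (X : ℝ[X]) - C (d i) := by
    ext i j
    by_cases h : i = j
    · subst h; simp
    · simp [Matrix.charmatrix_apply_ne _ _ _ h, Matrix.diagonal_apply_ne _ h]
  rw [this, Matrix.det_diagonal]

lemma prod_fin_ite_ne {M : Type*} [CommMonoid M] (m : ℕ) (hm : 0 < m) (c : M) :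
    (∏ j : Fin m, if (j : ℕ) ≠ 0 then c else 1) = c ^ (m - 1) := by
  have hiff : ∀ j : Fin m, ((j : ℕ) ≠ 0) ↔ j ≠ ⟨0, hm⟩ := by
    intro j; simp [Fin.ext_iff]
  simp only [hiff]
  rw [Finset.prod_ite, Finset.prod_const, Finset.prod_const, one_pow, mul_one,
    Finset.filter_ne', Finset.card_erase_of_mem (Finset.mem_univ _), Finset.card_univ,
    Fintype.card_fin]

lemma prod_fin_ite_eq {M : Type*} [CommMonoid M] (m : ℕ) (hm : 0 < m) (c : M) :
    (∏ j : Fin m, if (j : ℕ) = 0 then c else 1) = c := by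
  have hiff : ∀ j : Fin m, ((j : ℕ) = 0) ↔ j = ⟨0, hm⟩ := by
    intro j; simp [Fin.ext_iff]
  simp only [hiff]
  simp [Finset.prod_ite_eq']

lemma bfun_eq_zero_iff (x : Σ i : Fin t, Fin (n i)) :
    bfun n x = 0 ↔ (x.2 : ℕ) ≠ 0 := by
  unfold bfun; split_ifs with h1 h2 <;> simp_all
lemma bfun_eq_one_iff (x : Σ i : Fin t, Fin (n i)) :
    bfun n x = 1 ↔ (x.2 : ℕ) = 0 ∧ (x.1 : ℕ) ≠ 0 := by
  unfold bfun; split_ifs with h1 h2 <;> simp_all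
lemma bfun_eq_two_iff (x : Σ i : Fin t, Fin (n i)) :
    bfun n x = 2 ↔ (x.2 : ℕ) = 0 ∧ (x.1 : ℕ) = 0 := by
  unfold bfun; split_ifs with h1 h2 <;> simp_all

lemma Amat_blockTriangular (N : ℕ) : (Amat n N).BlockTriangular (bfun n) := by
  intro x y h
  by_cases hy2 : (y.2 : ℕ) ≠ 0
  · have hby : bfun n y = 0 := (bfun_eq_zero_iff n y).2 hy2
    have hbx : ¬ ((x.2 : ℕ) ≠ 0) := by
      intro hx
      rw [hby, (bfun_eq_zero_iff n x).2 hx] at h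
      exact absurd h (lt_irrefl _)
    have hxy : x ≠ y := by
      intro he; rw [he] at hbx; exact hbx hy2
    simp [Amat, hy2, hxy]
  · push_neg at hy2
    by_cases hy1 : (y.1 : ℕ) ≠ 0
    · have hby : bfun n y = 1 := (bfun_eq_one_iff n y).2 ⟨hy2, hy1⟩
      have hbx : bfun n x = 2 := by
        rw [hby] at h; omega
      obtain ⟨hx2, hx1⟩ := (bfun_eq_two_iff n x).1 hbx
      have hxy : x ≠ y := by
        intro he; rw [he] at hx1; exact hy1 hx1
      simp [Amat, hy2, hy1, hx2, hxy]
    · push_neg at hy1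
      have hby : bfun n y = 2 := (bfun_eq_two_iff n y).2 ⟨hy2, hy1⟩
      rw [hby] at h
      exfalso; omega

set_option maxHeartbeats 1000000 in
lemma Amat_charpoly (ht : 2 ≤ t) (hpos : ∀ i, 0 < n i) (N : ℕ) :
    (Amat n N).charpoly
      = X * (X - C (N : ℝ)) ^ (t - 1)
        * ∏ i : Fin t, (X - C ((N : ℝ) + (n i : ℝ))) ^ (n i - 1) := by
  rw [Matrix.charpoly, (Amat_blockTriangular n N).charmatrix.det_fintype]
  have hsb : ∀ a : Fin 3, ((Amat n N).charmatrix.toSquareBlock (bfun n) a)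
      = ((Amat n N).toSquareBlock (bfun n) a).charmatrix := by
    intro a; rw [Matrix.charmatrix_toSquareBlock]
  simp only [hsb]
  have hcp : ∀ a : Fin 3, ((Amat n N).toSquareBlock (bfun n) a).charmatrix.det
      = ((Amat n N).toSquareBlock (bfun n) a).charpoly := fun a => rfl
  simp only [hcp]
  rw [Fin.prod_univ_three]
  -- block 0
  have h0 : ((Amat n N).toSquareBlock (bfun n) 0).charpoly
      = ∏ i : Fin t, (X - C ((N : ℝ) + (n i : ℝ))) ^ (n i - 1) := by
    have hdiag : (Amat n N).toSquareBlock (bfun n) 0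
        = Matrix.diagonal (fun x : {x : Σ i : Fin t, Fin (n i) // bfun n x = 0} =>
            ((N : ℝ) + (n x.1.1 : ℝ))) := by
      ext ⟨x, hx⟩ ⟨y, hy⟩
      have hy2 : (y.2 : ℕ) ≠ 0 := (bfun_eq_zero_iff n y).1 hy
      by_cases hxy : x = y
      · subst hxy
        simp [Matrix.toSquareBlock_def, Amat, hy2, Matrix.diagonal_apply_eq]
      · have : (⟨x, hx⟩ : {x // bfun n x = 0}) ≠ ⟨y, hy⟩ := by
          simp [Subtype.ext_iff, hxy]
        simp [Matrix.toSquareBlock_def, Amat, hy2, hxy, Matrix.diagonal_apply_ne _ this]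
    rw [hdiag, _root_.charpoly_diagonal]
    rw [← Finset.prod_subtype (Finset.univ.filter fun x => bfun n x = 0) (by simp)
      (fun x : Σ i : Fin t, Fin (n i) => (X : ℝ[X]) - C ((N : ℝ) + (n x.1 : ℝ)))]
    rw [Finset.prod_filter, ← Finset.univ_sigma_univ, Finset.prod_sigma]
    refine Finset.prod_congr rfl fun i _ => ?_
    have : ∀ j : Fin (n i), (bfun n ⟨i, j⟩ = 0) ↔ (j : ℕ) ≠ 0 := fun j => bfun_eq_zero_iff n ⟨i, j⟩
    simp only [this]
    exact prod_fin_ite_ne (n i) (hpos i) _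
  -- block 1
  have h1 : ((Amat n N).toSquareBlock (bfun n) 1).charpoly
      = (X - C (N : ℝ)) ^ (t - 1) := by
    have hdiag : (Amat n N).toSquareBlock (bfun n) 1
        = Matrix.diagonal (fun _ : {x : Σ i : Fin t, Fin (n i) // bfun n x = 1} => (N : ℝ)) := by
      ext ⟨x, hx⟩ ⟨y, hy⟩
      obtain ⟨hy2, hy1⟩ := (bfun_eq_one_iff n y).1 hy
      obtain ⟨hx2, _⟩ := (bfun_eq_one_iff n x).1 hx
      by_cases hxy : x = y
      · subst hxy
        simp [Matrix.toSquareBlock_def, Amat, hy2, hy1, hx2, Matrix.diagonal_apply_eq]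
      · have : (⟨x, hx⟩ : {x // bfun n x = 1}) ≠ ⟨y, hy⟩ := by
          simp [Subtype.ext_iff, hxy]
        simp [Matrix.toSquareBlock_def, Amat, hy2, hy1, hx2, hxy,
          Matrix.diagonal_apply_ne _ this]
    rw [hdiag, _root_.charpoly_diagonal]
    rw [← Finset.prod_subtype (Finset.univ.filter fun x => bfun n x = 1) (by simp)
      (fun _ : Σ i : Fin t, Fin (n i) => (X : ℝ[X]) - C (N : ℝ))]
    rw [Finset.prod_filter, ← Finset.univ_sigma_univ, Finset.prod_sigma]
    have hinner : ∀ i : Fin t,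
        (∏ j : Fin (n i), if bfun n ⟨i, j⟩ = 1 then (X : ℝ[X]) - C (N : ℝ) else 1)
          = if (i : ℕ) ≠ 0 then (X : ℝ[X]) - C (N : ℝ) else 1 := by
      intro i
      have : ∀ j : Fin (n i), (bfun n ⟨i, j⟩ = 1) ↔ ((j : ℕ) = 0 ∧ (i : ℕ) ≠ 0) :=
        fun j => bfun_eq_one_iff n ⟨i, j⟩
      simp only [this]
      by_cases hi : (i : ℕ) ≠ 0
      · rw [if_pos hi]
        simp only [and_iff_left hi]
        exact prod_fin_ite_eq (n i) (hpos i) _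
      · simp [hi]
    rw [Finset.prod_congr rfl fun i _ => hinner i]
    exact prod_fin_ite_ne t (by omega) _
  -- block 2
  have h2 : ((Amat n N).toSquareBlock (bfun n) 2).charpoly = X := by
    have hdiag : (Amat n N).toSquareBlock (bfun n) 2
        = Matrix.diagonal (fun _ : {x : Σ i : Fin t, Fin (n i) // bfun n x = 2} => (0 : ℝ)) := by
      ext ⟨x, hx⟩ ⟨y, hy⟩
      obtain ⟨hy2, hy1⟩ := (bfun_eq_two_iff n y).1 hy
      obtain ⟨hx2, hx1⟩ := (bfun_eq_two_iff n x).1 hx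
      by_cases hxy : x = y
      · subst hxy
        simp [Matrix.toSquareBlock_def, Amat, hy2, hy1, hx2, hx1, Matrix.diagonal_apply_eq]
      · have : (⟨x, hx⟩ : {x // bfun n x = 2}) ≠ ⟨y, hy⟩ := by
          simp [Subtype.ext_iff, hxy]
        simp [Matrix.toSquareBlock_def, Amat, hy2, hy1, hx2, hx1, hxy,
          Matrix.diagonal_apply_ne _ this]
    rw [hdiag, _root_.charpoly_diagonal]
    rw [← Finset.prod_subtype (Finset.univ.filter fun x => bfun n x = 2) (by simp)
      (fun _ : Σ i : Fin t, Fin (n i) => (X : ℝ[X]) - C (0 : ℝ))]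
    rw [Finset.prod_filter, ← Finset.univ_sigma_univ, Finset.prod_sigma]
    have hinner : ∀ i : Fin t,
        (∏ j : Fin (n i), if bfun n ⟨i, j⟩ = 2 then (X : ℝ[X]) - C (0 : ℝ) else 1)
          = if (i : ℕ) = 0 then (X : ℝ[X]) - C (0 : ℝ) else 1 := by
      intro i
      have : ∀ j : Fin (n i), (bfun n ⟨i, j⟩ = 2) ↔ ((j : ℕ) = 0 ∧ (i : ℕ) = 0) :=
        fun j => bfun_eq_two_iff n ⟨i, j⟩
      simp only [this]
      by_cases hi : (i : ℕ) = 0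
      · rw [if_pos hi]
        simp only [and_iff_left hi]
        exact prod_fin_ite_eq (n i) (hpos i) _
      · simp [hi]
    rw [Finset.prod_congr rfl fun i _ => hinner i]
    rw [prod_fin_ite_eq t (by omega) _]
    simp
  rw [h0, h1, h2]
  ring

lemma sigma_mk_eq_iff {a i : Fin t} {b : Fin (n a)} {j : Fin (n i)} :
    (⟨a, b⟩ : Σ i : Fin t, Fin (n i)) = ⟨i, j⟩ ↔ a = i ∧ (b : ℕ) = (j : ℕ) := by
  constructor
  · intro h
    cases h
    exact ⟨rfl, rfl⟩
  · rintro ⟨rfl, h⟩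
    congr 1
    exact Fin.ext h

lemma sum_fin_ite_ne (m : ℕ) (hm : 0 < m) (c : ℝ) :
    (∑ j : Fin m, if (j : ℕ) ≠ 0 then c else 0) = ((m : ℝ) - 1) * c := by
  have hiff : ∀ j : Fin m, ((j : ℕ) ≠ 0) ↔ j ≠ ⟨0, hm⟩ := by
    intro j; simp [Fin.ext_iff]
  simp only [hiff]
  rw [Finset.sum_ite, Finset.sum_const, Finset.sum_const, Finset.filter_ne',
    Finset.card_erase_of_mem (Finset.mem_univ _), Finset.card_univ, Fintype.card_fin]
  have hm1 : ((m - 1 : ℕ) : ℝ) = (m : ℝ) - 1 := by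
    have : (1 : ℕ) ≤ m := hm
    push_cast [this]; ring
  simp [hm1]

lemma sum_fin_ite_eq (m : ℕ) (hm : 0 < m) (f : Fin m → ℝ) :
    (∑ j : Fin m, if (j : ℕ) = 0 then f j else 0) = f ⟨0, hm⟩ := by
  have hiff : ∀ j : Fin m, ((j : ℕ) = 0) ↔ j = ⟨0, hm⟩ := by
    intro j; simp [Fin.ext_iff]
  simp only [hiff]
  rw [Finset.sum_ite_eq' Finset.univ _ f]
  simp

lemma card_sigma_real (N : ℕ) (hN : N = ∑ i, n i) :
    ((Fintype.card (Σ i : Fin t, Fin (n i)) : ℝ)) = (N : ℝ) := by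
  rw [Fintype.card_sigma]
  simp [hN]

/-- closed form of the distance Laplacian entries -/
lemma dLap_apply' (N : ℕ) (hN : N = ∑ i, n i) (x y : Σ i : Fin t, Fin (n i)) :
    dLapKMP n x y
      = if x = y then ((N : ℝ) + (n x.1 : ℝ) - 2)
        else if x.1 = y.1 then -2 else -1 := by
  unfold dLapKMP
  rw [Matrix.sub_apply]
  by_cases hxy : x = y
  · subst hxy
    rw [Matrix.diagonal_apply_eq, if_pos rfl]
    have h0 : dMatKMP n x x = 0 := by simp [dMatKMP]
    rw [h0, sub_zero]
    have hsplit : ∀ z : Σ i : Fin t, Fin (n i),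
        dMatKMP n x z = 1 + (if x.1 = z.1 then (1:ℝ) else 0) - 2 * (if x = z then 1 else 0) := by
      intro z
      by_cases h1 : x = z
      · subst h1; simp [dMatKMP]; norm_num
      · by_cases h2 : x.1 = z.1 <;> simp [dMatKMP, h1, h2] <;> norm_num
    rw [Finset.sum_congr rfl fun z _ => hsplit z]
    rw [Finset.sum_sub_distrib, Finset.sum_add_distrib, Finset.sum_const, ← Finset.mul_sum]
    rw [Finset.sum_ite_eq Finset.univ x (fun _ => (1:ℝ))]
    have hblock : (∑ z : Σ i : Fin t, Fin (n i), if x.1 = z.1 then (1:ℝ) else 0)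
        = (n x.1 : ℝ) := by
      rw [← Finset.univ_sigma_univ, Finset.sum_sigma]
      have : ∀ i : Fin t, (∑ j : Fin (n i), if x.1 = i then (1:ℝ) else 0)
          = if x.1 = i then (n i : ℝ) else 0 := by
        intro i
        by_cases h : x.1 = i <;> simp [h]
      rw [Finset.sum_congr rfl fun i _ => this i]
      rw [Finset.sum_ite_eq Finset.univ x.1 (fun i => (n i : ℝ))]
      simp
    rw [hblock]
    simp only [Finset.mem_univ, if_pos, Finset.card_univ]
    rw [nsmul_eq_mul, mul_one, card_sigma_real n N hN]
    ring
  · rw [Matrix.diagonal_apply_ne _ hxy, if_neg hxy]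
    by_cases h2 : x.1 = y.1 <;> simp [dMatKMP, hxy, h2]


section Key
variable {t : ℕ} (n : Fin t → ℕ)

set_option maxHeartbeats 4000000 in
lemma key_intertwine (ht : 2 ≤ t) (hpos : ∀ i, 0 < n i) (N : ℕ) (hN : N = ∑ i, n i) :
    dLapKMP n * (1 - (EmatA n hpos + EmatB n ht hpos))
      = (1 - (EmatA n hpos + EmatB n ht hpos)) * Amat n N := by
  have ht0 : (0:ℕ) < t := by omega
  have hLE_A : ∀ x y, (dLapKMP n * EmatA n hpos) x y
      = if (y.2 : ℕ) ≠ 0 then dLapKMP n x ⟨y.1, ⟨0, hpos y.1⟩⟩ else 0 := by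
    intro x y
    rw [Matrix.mul_apply]
    simp only [EmatA, mul_ite, mul_one, mul_zero]
    by_cases hq : (y.2 : ℕ) ≠ 0
    · rw [if_pos hq]
      simp only [and_iff_left hq]
      rw [Finset.sum_ite_eq' Finset.univ (⟨y.1, ⟨0, hpos y.1⟩⟩ : Σ i : Fin t, Fin (n i))
        (fun z => dLapKMP n x z)]
      simp
    · rw [if_neg hq]
      refine Finset.sum_eq_zero fun z _ => ?_
      rw [if_neg (by tauto)]
  have hLE_B : ∀ x y, (dLapKMP n * EmatB n ht hpos) x y
      = if ((y.2 : ℕ) = 0 ∧ (y.1 : ℕ) ≠ 0) then dLapKMP n x (v0KMP n ht hpos) else 0 := by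
    intro x y
    rw [Matrix.mul_apply]
    simp only [EmatB, mul_ite, mul_one, mul_zero]
    by_cases hq : ((y.2 : ℕ) = 0 ∧ (y.1 : ℕ) ≠ 0)
    · rw [if_pos hq]
      simp only [and_iff_left hq]
      rw [Finset.sum_ite_eq' Finset.univ (v0KMP n ht hpos) (fun z => dLapKMP n x z)]
      simp
    · rw [if_neg hq]
      refine Finset.sum_eq_zero fun z _ => ?_
      rw [if_neg (by tauto)]
  have hEA_A : ∀ x y, (EmatA n hpos * Amat n N) x y
      = if (x.2 : ℕ) = 0
          then (∑ j' : Fin (n x.1), if (j' : ℕ) ≠ 0 then Amat n N ⟨x.1, j'⟩ y else 0)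
          else 0 := by
    intro x y
    rw [Matrix.mul_apply, ← Finset.univ_sigma_univ, Finset.sum_sigma]
    obtain ⟨a, b⟩ := x
    simp only [EmatA, ite_mul, one_mul, zero_mul]
    by_cases hb : (b : ℕ) = 0
    · rw [if_pos hb]
      have hterm : ∀ i : Fin t,
          (∑ j : Fin (n i),
            if (⟨a, b⟩ : Σ i : Fin t, Fin (n i)) = ⟨i, ⟨0, hpos i⟩⟩ ∧ (j : ℕ) ≠ 0
            then Amat n N ⟨i, j⟩ y else 0)
          = if i = a then (∑ j' : Fin (n a), if (j' : ℕ) ≠ 0 then Amat n N ⟨a, j'⟩ y else 0)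
            else 0 := by
        intro i
        by_cases hia : i = a
        · subst hia
          rw [if_pos rfl]
          refine Finset.sum_congr rfl fun j _ => ?_
          have htrue : (⟨i, b⟩ : Σ i : Fin t, Fin (n i)) = ⟨i, ⟨0, hpos i⟩⟩ := by
            rw [sigma_mk_eq_iff]; exact ⟨rfl, hb⟩
          simp only [htrue, true_and, eq_self_iff_true, if_true]
        · rw [if_neg hia]
          refine Finset.sum_eq_zero fun j _ => ?_
          rw [if_neg]
          rintro ⟨h1, -⟩
          rw [sigma_mk_eq_iff] at h1
          exact hia h1.1.symm
      rw [Finset.sum_congr rfl fun i _ => hterm i]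
      rw [Finset.sum_ite_eq' Finset.univ a
        (fun _ => ∑ j' : Fin (n a), if (j' : ℕ) ≠ 0 then Amat n N ⟨a, j'⟩ y else 0)]
      simp
    · rw [if_neg hb]
      refine Finset.sum_eq_zero fun i _ => Finset.sum_eq_zero fun j _ => ?_
      rw [if_neg]
      rintro ⟨h1, -⟩
      rw [sigma_mk_eq_iff] at h1
      exact hb h1.2
  have hEB_A : ∀ x y, (EmatB n ht hpos * Amat n N) x y
      = if x = v0KMP n ht hpos
          then (∑ i' : Fin t, if (i' : ℕ) ≠ 0 then Amat n N ⟨i', ⟨0, hpos i'⟩⟩ y else 0)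
          else 0 := by
    intro x y
    rw [Matrix.mul_apply, ← Finset.univ_sigma_univ, Finset.sum_sigma]
    simp only [EmatB, ite_mul, one_mul, zero_mul]
    by_cases hx : x = v0KMP n ht hpos
    · rw [if_pos hx]
      have hterm : ∀ i : Fin t,
          (∑ j : Fin (n i),
            if x = v0KMP n ht hpos ∧ (j : ℕ) = 0 ∧ (i : ℕ) ≠ 0
            then Amat n N ⟨i, j⟩ y else 0)
          = if (i : ℕ) ≠ 0 then Amat n N ⟨i, ⟨0, hpos i⟩⟩ y else 0 := by
        intro i
        by_cases hi : (i : ℕ) ≠ 0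
        · rw [if_pos hi]
          have hc : ∀ j : Fin (n i),
              (x = v0KMP n ht hpos ∧ (j : ℕ) = 0 ∧ (i : ℕ) ≠ 0) ↔ ((j : ℕ) = 0) := by
            intro j
            constructor
            · rintro ⟨-, h, -⟩; exact h
            · intro h; exact ⟨hx, h, hi⟩
          simp only [hc]
          exact sum_fin_ite_eq (n i) (hpos i) (fun j => Amat n N ⟨i, j⟩ y)
        · rw [if_neg hi]
          refine Finset.sum_eq_zero fun j _ => ?_
          rw [if_neg (by tauto)]
      rw [Finset.sum_congr rfl fun i _ => hterm i]
    · rw [if_neg hx]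
      refine Finset.sum_eq_zero fun i _ => Finset.sum_eq_zero fun j _ => ?_
      rw [if_neg (by tauto)]
  -- evaluation of the inner column sums of Amat
  have hSA : ∀ (a : Fin t) (y : Σ i : Fin t, Fin (n i)),
      (∑ j' : Fin (n a), if (j' : ℕ) ≠ 0 then Amat n N ⟨a, j'⟩ y else 0)
      = if (y.2 : ℕ) ≠ 0 then (if a = y.1 then (N : ℝ) + (n y.1 : ℝ) else 0)
        else if (y.1 : ℕ) ≠ 0 then
          ((n a : ℝ) - 1) * (if a = y.1 then -1 else if (a : ℕ) = 0 then 1 else 0)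
        else ((n a : ℝ) - 1) * (if (a : ℕ) = 0 then -2 else -1) := by
    intro a y
    obtain ⟨i, j⟩ := y
    by_cases hj : (j : ℕ) ≠ 0
    · rw [if_pos hj]
      have hA : ∀ j' : Fin (n a), Amat n N ⟨a, j'⟩ ⟨i, j⟩
          = if a = i ∧ (j' : ℕ) = (j : ℕ) then (N : ℝ) + (n i : ℝ) else 0 := by
        intro j'
        simp only [Amat]
        rw [if_pos hj]
        by_cases h : (⟨a, j'⟩ : Σ i : Fin t, Fin (n i)) = ⟨i, j⟩
        · rw [if_pos h, if_pos (sigma_mk_eq_iff n |>.1 h)]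
        · rw [if_neg h, if_neg (fun hc => h ((sigma_mk_eq_iff n).2 hc))]
      simp only [hA]
      by_cases hai : a = i
      · subst hai
        rw [if_pos rfl]
        simp only [true_and]
        have : ∀ j' : Fin (n a), (if (j' : ℕ) ≠ 0 then
            (if (j' : ℕ) = (j : ℕ) then (N : ℝ) + (n a : ℝ) else 0) else 0)
            = if j' = j then (N : ℝ) + (n a : ℝ) else 0 := by
          intro j'
          by_cases h : j' = j
          · subst h; simp [hj]
          · have : (j' : ℕ) = (j : ℕ) → False := fun hc => h (Fin.ext hc)
            by_cases h2 : (j' : ℕ) ≠ 0 <;> simp [h2, h, this]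
            intro hc; exact absurd (Fin.ext hc) h
        rw [Finset.sum_congr rfl fun j' _ => this j']
        rw [Finset.sum_ite_eq' Finset.univ j (fun _ => (N : ℝ) + (n a : ℝ))]
        simp
      · rw [if_neg hai]
        refine Finset.sum_eq_zero fun j' _ => ?_
        simp [hai]
    · push_neg at hj
      rw [if_neg (by simpa using hj)]
      by_cases hi : (i : ℕ) ≠ 0
      · rw [if_pos hi]
        have hA : ∀ j' : Fin (n a), (j' : ℕ) ≠ 0 → Amat n N ⟨a, j'⟩ ⟨i, j⟩
            = (if a = i then -1 else if (a : ℕ) = 0 then 1 else 0) := by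
          intro j' hj'
          simp only [Amat]
          rw [if_neg (by simpa using hj), if_pos hi, if_neg (by simpa using hj')]
        have : ∀ j' : Fin (n a), (if (j' : ℕ) ≠ 0 then Amat n N ⟨a, j'⟩ ⟨i, j⟩ else 0)
            = (if (j' : ℕ) ≠ 0 then (if a = i then -1 else if (a : ℕ) = 0 then 1 else 0)
               else 0) := by
          intro j'
          by_cases h : (j' : ℕ) ≠ 0
          · rw [if_pos h, if_pos h, hA j' h]
          · rw [if_neg h, if_neg h]
        rw [Finset.sum_congr rfl fun j' _ => this j']
        exact sum_fin_ite_ne (n a) (hpos a) _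
      · rw [if_neg hi]
        push_neg at hi
        have hA : ∀ j' : Fin (n a), (j' : ℕ) ≠ 0 → Amat n N ⟨a, j'⟩ ⟨i, j⟩
            = (if (a : ℕ) = 0 then -2 else -1) := by
          intro j' hj'
          simp only [Amat]
          rw [if_neg (by simpa using hj), if_neg (by simpa using hi),
            if_neg (by simpa using hj')]
        have : ∀ j' : Fin (n a), (if (j' : ℕ) ≠ 0 then Amat n N ⟨a, j'⟩ ⟨i, j⟩ else 0)
            = (if (j' : ℕ) ≠ 0 then (if (a : ℕ) = 0 then -2 else -1) else 0) := by
          intro j'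
          by_cases h : (j' : ℕ) ≠ 0
          · rw [if_pos h, if_pos h, hA j' h]
          · rw [if_neg h, if_neg h]
        rw [Finset.sum_congr rfl fun j' _ => this j']
        exact sum_fin_ite_ne (n a) (hpos a) _
  have hSB : ∀ y : Σ i : Fin t, Fin (n i),
      (∑ i' : Fin t, if (i' : ℕ) ≠ 0 then Amat n N ⟨i', ⟨0, hpos i'⟩⟩ y else 0)
      = if (y.2 : ℕ) ≠ 0 then 0
        else if (y.1 : ℕ) ≠ 0 then (N : ℝ)
        else -((N : ℝ) - (n ⟨0, ht0⟩ : ℝ)) := by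
    intro y
    obtain ⟨i, j⟩ := y
    by_cases hj : (j : ℕ) ≠ 0
    · rw [if_pos hj]
      refine Finset.sum_eq_zero fun i' _ => ?_
      have hA : Amat n N ⟨i', ⟨0, hpos i'⟩⟩ ⟨i, j⟩ = 0 := by
        simp only [Amat]
        rw [if_pos hj, if_neg ?_]
        intro h
        exact hj (((sigma_mk_eq_iff n).1 h).2).symm
      rw [hA, ite_self]
    · push_neg at hj
      rw [if_neg (by simpa using hj)]
      by_cases hi : (i : ℕ) ≠ 0
      · rw [if_pos hi]
        have hA : ∀ i' : Fin t, Amat n N ⟨i', ⟨0, hpos i'⟩⟩ ⟨i, j⟩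
            = if i' = i then (N : ℝ) else 0 := by
          intro i'
          simp only [Amat]
          rw [if_neg (by simpa using hj), if_pos hi, if_pos trivial]
          by_cases h : i' = i
          · rw [if_pos ((sigma_mk_eq_iff n).2 ⟨h, by simp [hj]⟩), if_pos h]
          · rw [if_neg (fun hc => h ((sigma_mk_eq_iff n).1 hc).1), if_neg h]
        simp only [hA]
        have hstep : ∀ i' : Fin t,
            (if (i' : ℕ) ≠ 0 then (if i' = i then (N : ℝ) else 0) else 0)
            = if i' = i then (N : ℝ) else 0 := by
          intro i'
          by_cases h : i' = i
          · subst h; simp [hi]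
          · simp [h]
        rw [Finset.sum_congr rfl fun i' _ => hstep i',
          Finset.sum_ite_eq' Finset.univ i (fun _ => (N : ℝ))]
        simp
      · push_neg at hi
        rw [if_neg (by simpa using hi)]
        have hA : ∀ i' : Fin t, (i' : ℕ) ≠ 0 → Amat n N ⟨i', ⟨0, hpos i'⟩⟩ ⟨i, j⟩
            = -(n i' : ℝ) := by
          intro i' hi'
          simp only [Amat]
          rw [if_neg (by simpa using hj), if_neg (by simpa using hi), if_pos trivial,
            if_neg hi']
        have hsplit : ∀ i' : Fin t,
            (if (i' : ℕ) ≠ 0 then Amat n N ⟨i', ⟨0, hpos i'⟩⟩ ⟨i, j⟩ else 0)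
            = -(n i' : ℝ) - (if (i' : ℕ) = 0 then -(n i' : ℝ) else 0) := by
          intro i'
          by_cases h : (i' : ℕ) = 0
          · rw [if_neg (by simpa using h), if_pos h]; ring
          · rw [if_pos h, if_neg h, hA i' h]; ring
        rw [Finset.sum_congr rfl fun i' _ => hsplit i', Finset.sum_sub_distrib,
          sum_fin_ite_eq t ht0 (fun i' => -(n i' : ℝ))]
        have hsum : (∑ i' : Fin t, -(n i' : ℝ)) = -(N : ℝ) := by
          rw [Finset.sum_neg_distrib, hN]
          push_cast
          ring
        rw [hsum]
        ring
  rw [mul_sub, mul_one, mul_add, sub_mul, one_mul, add_mul]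
  ext x y
  rw [Matrix.sub_apply, Matrix.sub_apply, Matrix.add_apply, Matrix.add_apply,
    hLE_A x y, hLE_B x y, hEA_A x y, hEB_A x y, hSA x.1 y, hSB y]
  obtain ⟨a, b⟩ := x
  obtain ⟨i, j⟩ := y
  simp only [dLap_apply' n N hN, Amat, v0KMP]
  by_cases hai : a = i
  · subst hai
    simp only [sigma_mk_eq_iff, Fin.ext_iff, eq_self_iff_true, true_and]
    by_cases ha0 : (a : ℕ) = 0
    · rw [show (⟨0, ht0⟩ : Fin t) = a from (Fin.ext ha0).symm]
      split_ifs <;> push_cast <;> first | ring1 | (exfalso; omega)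
    · split_ifs <;> push_cast <;> first | ring1 | (exfalso; omega)
  · have haiv : ¬ ((a : ℕ) = (i : ℕ)) := fun h => hai (Fin.ext h)
    simp only [sigma_mk_eq_iff, Fin.ext_iff, eq_self_iff_true, true_and]
    by_cases ha0 : (a : ℕ) = 0
    · rw [show (⟨0, ht0⟩ : Fin t) = a from (Fin.ext ha0).symm]
      split_ifs <;> push_cast <;> first | ring1 | (exfalso; omega)
    · split_ifs <;> push_cast <;> first | ring1 | (exfalso; omega)
end Key

/-- The distance Laplacian spectrum of `K_{n_1,…,n_t}` on
`N = n_1 + ⋯ + n_t` vertices is `{0, N^{[t-1]}, (N + n_i)^{[n_i-1]}}`, stated via the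
characteristic polynomial. -/
theorem distLap_spectrum_completeMultipartite {t : ℕ} (ht : 2 ≤ t)
    (n : Fin t → ℕ) (hpos : ∀ i, 0 < n i) (N : ℕ) (hN : N = ∑ i, n i) :
    (dLapKMP n).charpoly
      = X * (X - C (N : ℝ)) ^ (t - 1)
        * ∏ i : Fin t, (X - C ((N : ℝ) + (n i : ℝ))) ^ (n i - 1) := by
  have hPQ := (PQ_one n ht hpos).1
  have hQP := (PQ_one n ht hpos).2
  have hk := key_intertwine n ht hpos N hN
  set F := EmatA n hpos + EmatB n ht hpos with hF
  have hL : dLapKMP n = (1 - F) * Amat n N * (1 + F + F * F) := by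
    calc dLapKMP n = dLapKMP n * ((1 - F) * (1 + F + F * F)) := by rw [hPQ, mul_one]
    _ = (dLapKMP n * (1 - F)) * (1 + F + F * F) := by rw [mul_assoc]
    _ = ((1 - F) * Amat n N) * (1 + F + F * F) := by rw [hk]
    _ = (1 - F) * Amat n N * (1 + F + F * F) := rfl
  rw [hL, my_charpoly_conj (1 + F + F * F) (1 - F) (Amat n N) hQP hPQ]
  exact Amat_charpoly n ht hpos N
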